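/- The canonical Poisson bracket {g_k, g_{k+1}} of consecutive determinants equals -(1/2) u_{k+1}, and {g_k, g_j} = 0 whenever |k - j| ≥ 2 (mod N). -/
import Mathlib


noncomputable section

open Function

/-- The canonical Poisson bracket on `ℝ^{2N}` with coordinates
`(x_i, y_i)`, `i : ZMod N`, determined by `{x_i, y_i} = 1/2` and all other
coordinate brackets zero:
`{f, g} = (1/2) ∑ i (∂f/∂x_i ∂g/∂y_i - ∂f/∂y_i ∂g/∂x_i)`. -/
def pb (N : ℕ) [NeZero N] (f g : (ZMod N → ℝ) × (ZMod N → ℝ) → ℝ)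
    (p : (ZMod N → ℝ) × (ZMod N → ℝ)) : ℝ :=
  (1 / 2) * ∑ i : ZMod N,
    (deriv (fun t => f (Function.update p.1 i t, p.2)) (p.1 i) *
        deriv (fun t => g (p.1, Function.update p.2 i t)) (p.2 i) -
      deriv (fun t => f (p.1, Function.update p.2 i t)) (p.2 i) *
        deriv (fun t => g (Function.update p.1 i t, p.2)) (p.1 i))

/-- `g_k = x_k y_{k+1} - y_k x_{k+1}` (indices mod `N`). -/
def Gv (N : ℕ) (k : ZMod N) (p : (ZMod N → ℝ) × (ZMod N → ℝ)) : ℝ :=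
  p.1 k * p.2 (k + 1) - p.2 k * p.1 (k + 1)

/-- `u_k = x_{k-1} y_{k+1} - y_{k-1} x_{k+1}` (indices mod `N`). -/
def Uv (N : ℕ) (k : ZMod N) (p : (ZMod N → ℝ) × (ZMod N → ℝ)) : ℝ :=
  p.1 (k - 1) * p.2 (k + 1) - p.2 (k - 1) * p.1 (k + 1)

/-- Flaschka–Manakov variable `a_k = g_k^{-2}`. -/
def Av (N : ℕ) (k : ZMod N) (p : (ZMod N → ℝ) × (ZMod N → ℝ)) : ℝ :=
  (Gv N k p ^ 2)⁻¹

/-- Flaschka–Manakov variable `b_k = u_k/(g_{k-1} g_k) - λ`. -/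
def Bv (N : ℕ) (lam : ℝ) (k : ZMod N) (p : (ZMod N → ℝ) × (ZMod N → ℝ)) : ℝ :=
  Uv N k p / (Gv N (k - 1) p * Gv N k p) - lam

lemma derivX (N : ℕ) [NeZero N] (h10 : (1:ZMod N) ≠ 0)
    (p : (ZMod N → ℝ) × (ZMod N → ℝ)) (m i : ZMod N) :
    deriv (fun t => Gv N m (Function.update p.1 i t, p.2)) (p.1 i)
      = (if m = i then p.2 (m+1) else 0) - (if m + 1 = i then p.2 m else 0) := by
  unfold Gv
  simp only [Function.update_apply]
  by_cases hm : m = i <;> by_cases hm1 : m + 1 = i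
  · exact absurd (add_eq_left.mp (hm1.trans hm.symm)) h10
  · simp only [if_pos hm, if_neg hm1]
    simpa using (((hasDerivAt_id (p.1 i)).mul_const (p.2 (m+1))).sub_const
      (p.2 m * p.1 (m+1))).deriv
  · simp only [if_neg hm, if_pos hm1]
    simpa using ((hasDerivAt_const (p.1 i) (p.1 m * p.2 (m+1))).sub
      ((hasDerivAt_id (p.1 i)).const_mul (p.2 m))).deriv
  · simp [if_neg hm, if_neg hm1]

lemma derivY (N : ℕ) [NeZero N] (h10 : (1:ZMod N) ≠ 0)
    (p : (ZMod N → ℝ) × (ZMod N → ℝ)) (m i : ZMod N) :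
    deriv (fun t => Gv N m (p.1, Function.update p.2 i t)) (p.2 i)
      = (if m + 1 = i then p.1 m else 0) - (if m = i then p.1 (m+1) else 0) := by
  unfold Gv
  simp only [Function.update_apply]
  by_cases hm : m = i <;> by_cases hm1 : m + 1 = i
  · exact absurd (add_eq_left.mp (hm1.trans hm.symm)) h10
  · simp only [if_pos hm, if_neg hm1]
    simpa using ((hasDerivAt_const (p.2 i) (p.1 m)).sub
      ((hasDerivAt_id (p.2 i)).mul_const (p.1 (m+1)))).deriv
  · simp only [if_neg hm, if_pos hm1]
    simpa using (((hasDerivAt_id (p.2 i)).const_mul (p.1 m)).sub_const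
      (p.2 m * p.1 (m+1))).deriv
  · simp [if_neg hm, if_neg hm1]


theorem stmt12 (N : ℕ) [NeZero N] (hN : 3 < N)
    (p : (ZMod N → ℝ) × (ZMod N → ℝ)) (k : ZMod N) :
    pb N (Gv N k) (Gv N (k + 1)) p = -(1 / 2) * Uv N (k + 1) p ∧
    ∀ j : ZMod N, j ≠ k - 1 → j ≠ k → j ≠ k + 1 →
      pb N (Gv N k) (Gv N j) p = 0 := by
  have h10 : (1:ZMod N) ≠ 0 := by
    have : ¬ ((1:ℕ):ZMod N) = 0 := by
      rw [ZMod.natCast_eq_zero_iff]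
      intro h; exact absurd (Nat.le_of_dvd one_pos h) (by omega)
    simpa using this
  have h20 : (2:ZMod N) ≠ 0 := by
    have : ¬ ((2:ℕ):ZMod N) = 0 := by
      rw [ZMod.natCast_eq_zero_iff]
      intro h; exact absurd (Nat.le_of_dvd two_pos h) (by omega)
    simpa using this
  have hne1 : ∀ a : ZMod N, a + 1 ≠ a := fun a h => h10 (add_eq_left.mp h)
  have hne2 : ∀ a : ZMod N, a + 1 + 1 ≠ a := by
    intro a h
    rw [add_assoc] at h
    have := add_eq_left.mp h
    rw [one_add_one_eq_two] at this
    exact h20 this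
  constructor
  · unfold pb
    have key : ∀ i : ZMod N,
        (deriv (fun t => Gv N k (Function.update p.1 i t, p.2)) (p.1 i) *
            deriv (fun t => Gv N (k+1) (p.1, Function.update p.2 i t)) (p.2 i) -
          deriv (fun t => Gv N k (p.1, Function.update p.2 i t)) (p.2 i) *
            deriv (fun t => Gv N (k+1) (Function.update p.1 i t, p.2)) (p.1 i))
          = if k + 1 = i then
              (p.2 k * p.1 (k+1+1) - p.1 k * p.2 (k+1+1)) else 0 := by
      intro i
      rw [derivX N h10 p k i, derivY N h10 p (k+1) i, derivY N h10 p k i,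
        derivX N h10 p (k+1) i]
      by_cases h1 : k = i <;> by_cases h2 : k + 1 = i <;>
        by_cases h3 : k + 1 + 1 = i <;>
      first
        | exact absurd (h2.trans h1.symm) (hne1 k)
        | exact absurd (h3.trans h1.symm) (hne2 k)
        | exact absurd (h3.trans h2.symm) (hne1 (k+1))
        | (simp [h1, h2, h3, h10, hne1, hne2]; try ring)
    rw [Finset.sum_congr rfl (fun i _ => key i), Finset.sum_ite_eq]
    simp only [Finset.mem_univ, if_pos, Uv, add_sub_cancel_right]
    ring
  · intro j hj1 hj2 hj3
    unfold pb
    rw [Finset.sum_eq_zero, mul_zero]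
    intro i _
    rw [derivX N h10 p k i, derivY N h10 p j i, derivY N h10 p k i,
      derivX N h10 p j i]
    by_cases h1 : k = i <;> by_cases h2 : k + 1 = i <;>
      by_cases h3 : j = i <;> by_cases h4 : j + 1 = i <;>
    first
      | exact absurd (h2.trans h1.symm) (hne1 k)
      | exact absurd (h4.trans h3.symm) (hne1 j)
      | exact absurd (h3.trans h1.symm) hj2
      | exact absurd (eq_sub_of_add_eq (h4.trans h1.symm)) hj1
      | exact absurd (h3.trans h2.symm) hj3
      | exact absurd (add_right_cancel (h4.trans h2.symm)) hj2
      | simp [h1, h2, h3, h4, h10, hne1, hne2]
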